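/- Assume γ > β_p (in addition to β_p > β̂_p > 0). Then 1 − γ/β̂_p < 0 and 1 − γ/(αβ̂_p) < 0 (so neither endemic point E2 = (1 − γ/β̂_p, γ/β̂_p) nor E3 = (1 − γ/(αβ̂_p), γ/(αβ̂_p)) lies in the admissible region), and every solution (y, r) of the reduced hybrid SIRI dynamics (strengthened immunity) with y(0) ∈ (0,1] satisfies y'(t) ≤ (β_p − γ)·y(t) for all t ≥ 0; in particular y is nonincreasing, y(t) ≤ y(0)·exp((β_p − γ)t), and y(t) → 0 monotonically as t → ∞. -/

import Mathlib

/-- A solution of the reduced hybrid SIRI dynamics (strengthened immunity,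
β_p > β̂_p, so y*_int = c_P/(L(1−α)β_p) < ŷ*_int = c_P/(L(1−α)β̂_p)): a pair of
differentiable functions y, r : [0,∞) → ℝ with y ≥ 0, r ≥ 0, y + r ≤ 1,
following the five regimes of the hybrid dynamics, with a convex combination
(parametrized by z ∈ [0,1]) at the two thresholds. -/
def IsReducedSIRISolStrong (βp βhp α γ cP L : ℝ) (y r : ℝ → ℝ) : Prop :=
  (∀ t ≥ (0:ℝ), 0 ≤ y t ∧ 0 ≤ r t ∧ y t + r t ≤ 1) ∧
  ∀ t ≥ (0:ℝ),
    (y t < cP / (L * (1 - α) * βp) →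
      HasDerivAt y ((βp * (1 - r t - y t) + βhp * r t - γ) * y t) t ∧
      HasDerivAt r ((-(βhp * r t) + γ) * y t) t) ∧
    (y t = cP / (L * (1 - α) * βp) → ∃ z ∈ Set.Icc (0:ℝ) 1,
      HasDerivAt y
        (((z + α * (1 - z)) * βp * (1 - r t - y t) + βhp * r t - γ) * y t) t ∧
      HasDerivAt r ((-(βhp * r t) + γ) * y t) t) ∧
    (cP / (L * (1 - α) * βp) < y t ∧ y t < cP / (L * (1 - α) * βhp) →
      HasDerivAt y ((α * βp * (1 - r t - y t) + βhp * r t - γ) * y t) t ∧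
      HasDerivAt r ((-(βhp * r t) + γ) * y t) t) ∧
    (y t = cP / (L * (1 - α) * βhp) → ∃ z ∈ Set.Icc (0:ℝ) 1,
      HasDerivAt y
        ((α * βp * (1 - r t - y t) + (z + α * (1 - z)) * βhp * r t - γ) * y t) t ∧
      HasDerivAt r ((-((z + α * (1 - z)) * βhp * r t) + γ) * y t) t) ∧
    (cP / (L * (1 - α) * βhp) < y t →
      HasDerivAt y ((α * βp * (1 - r t - y t) + α * βhp * r t - γ) * y t) t ∧
      HasDerivAt r ((-(α * βhp * r t) + γ) * y t) t)

/-- If γ > β_p (> β̂_p), then the endemic levels 1 − γ/β̂_p and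
1 − γ/(αβ̂_p) are negative (so neither E2 nor E3 is admissible), and every
solution of the reduced hybrid SIRI dynamics (strengthened immunity) with
y(0) ∈ (0,1] satisfies y'(t) ≤ (β_p − γ)y(t); in particular y is nonincreasing,
satisfies y(t) ≤ y(0)·exp((β_p − γ)t), and converges monotonically to 0. -/
theorem reduced_siri_strong_diseasefree
    (βp βhp α γ cP L : ℝ)
    (hβ : βp > βhp) (hβhp : βhp > 0) (hα : α ∈ Set.Ioo (0:ℝ) 1)
    (hγβ : γ > βp) (hcP : cP > 0) (hL : L > 0) :
    1 - γ / βhp < 0 ∧ 1 - γ / (α * βhp) < 0 ∧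
    ∀ y r : ℝ → ℝ, IsReducedSIRISolStrong βp βhp α γ cP L y r →
      y 0 ∈ Set.Ioc (0:ℝ) 1 →
      (∀ t ≥ (0:ℝ), deriv y t ≤ (βp - γ) * y t) ∧
      AntitoneOn y (Set.Ici 0) ∧
      (∀ t ≥ (0:ℝ), y t ≤ y 0 * Real.exp ((βp - γ) * t)) ∧
      Filter.Tendsto y Filter.atTop (nhds 0) := by
  obtain ⟨hα0, hα1⟩ := hα
  have hβp : (0:ℝ) < βp := hβhp.trans hβ
  have hγ0 : (0:ℝ) < γ := hβp.trans hγβ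
  refine ⟨by
    have h1 : 1 < γ / βhp := (one_lt_div hβhp).2 (by linarith)
    linarith, by
    have hab : 0 < α * βhp := mul_pos hα0 hβhp
    have h1 : 1 < γ / (α * βhp) := (one_lt_div hab).2 (by nlinarith)
    linarith, ?_⟩
  intro y r hsol hy0
  have key : ∀ t ≥ (0:ℝ), ∃ c, c ≤ βp - γ ∧ HasDerivAt y (c * y t) t := by
    intro t ht
    obtain ⟨hy, hr, hyr⟩ := hsol.1 t ht
    have hs : 0 ≤ 1 - r t - y t := by linarith
    obtain ⟨h1, h2, h3, h4, h5⟩ := hsol.2 t ht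
    rcases lt_trichotomy (y t) (cP / (L * (1 - α) * βp)) with hA | hA | hA
    · refine ⟨_, ?_, (h1 hA).1⟩
      nlinarith [mul_nonneg hβp.le hy, mul_nonneg (sub_nonneg.2 hβ.le) hr]
    · obtain ⟨z, ⟨hz0, hz1⟩, hd, _⟩ := h2 hA
      refine ⟨_, ?_, hd⟩
      have hk1 : z + α * (1 - z) ≤ 1 := by nlinarith
      have hk0 : 0 ≤ z + α * (1 - z) := by nlinarith
      nlinarith [mul_nonneg hβp.le hy, mul_nonneg (sub_nonneg.2 hβ.le) hr,
        mul_nonneg (mul_nonneg hk0 hβp.le) hs, mul_nonneg hβp.le hs]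
    · rcases lt_trichotomy (y t) (cP / (L * (1 - α) * βhp)) with hB | hB | hB
      · refine ⟨_, ?_, (h3 ⟨hA, hB⟩).1⟩
        nlinarith [mul_nonneg hβp.le hy, mul_nonneg (sub_nonneg.2 hβ.le) hr,
          mul_nonneg hβp.le hs]
      · obtain ⟨z, ⟨hz0, hz1⟩, hd, _⟩ := h4 hB
        refine ⟨_, ?_, hd⟩
        have hk1 : z + α * (1 - z) ≤ 1 := by nlinarith
        have hk0 : 0 ≤ z + α * (1 - z) := by nlinarith
        nlinarith [mul_nonneg hβp.le hy, mul_nonneg (sub_nonneg.2 hβ.le) hr,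
          mul_nonneg hβp.le hs, mul_nonneg hβhp.le hr,
          mul_nonneg (mul_nonneg hk0 hβhp.le) hr]
      · refine ⟨_, ?_, (h5 hB).1⟩
        nlinarith [mul_nonneg hβp.le hy, mul_nonneg (sub_nonneg.2 hβ.le) hr,
          mul_nonneg hβp.le hs]
  have hderiv : ∀ t ≥ (0:ℝ), deriv y t ≤ (βp - γ) * y t := by
    intro t ht
    obtain ⟨c, hc, hd⟩ := key t ht
    rw [hd.deriv]
    exact mul_le_mul_of_nonneg_right hc (hsol.1 t ht).1
  have hynn : ∀ t ≥ (0:ℝ), 0 ≤ y t := fun t ht => (hsol.1 t ht).1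
  have hdiff : ∀ t ∈ Set.Ici (0:ℝ), DifferentiableAt ℝ y t := by
    intro t ht
    obtain ⟨c, _, hd⟩ := key t ht
    exact hd.differentiableAt
  have hanti : AntitoneOn y (Set.Ici 0) := by
    apply antitoneOn_of_deriv_nonpos (convex_Ici 0)
    · exact fun t ht => (hdiff t ht).continuousAt.continuousWithinAt
    · intro t ht
      rw [interior_Ici] at ht
      exact (hdiff t (Set.mem_Ici.mpr (le_of_lt ht))).differentiableWithinAt
    · intro t ht
      rw [interior_Ici] at ht
      have h1 := hderiv t (le_of_lt ht)
      have h2 := hynn t (le_of_lt ht)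
      nlinarith
  -- exponential bound via g t = y t * exp ((γ - βp) * t)
  set g : ℝ → ℝ := fun t => y t * Real.exp ((γ - βp) * t) with hg
  have hgderiv : ∀ t ≥ (0:ℝ), ∃ c ≤ (0:ℝ),
      HasDerivAt g (c * (y t * Real.exp ((γ - βp) * t))) t := by
    intro t ht
    obtain ⟨c, hc, hd⟩ := key t ht
    refine ⟨c + (γ - βp), by linarith, ?_⟩
    have he : HasDerivAt (fun s => Real.exp ((γ - βp) * s))
        (Real.exp ((γ - βp) * t) * ((γ - βp) * 1)) t :=
      (Real.hasDerivAt_exp _).comp t ((hasDerivAt_id t).const_mul (γ - βp))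
    have := hd.mul he
    refine this.congr_deriv ?_
    ring
  have hganti : AntitoneOn g (Set.Ici 0) := by
    apply antitoneOn_of_deriv_nonpos (convex_Ici 0)
    · intro t ht
      obtain ⟨c, _, hd⟩ := hgderiv t ht
      exact hd.differentiableAt.continuousAt.continuousWithinAt
    · intro t ht
      rw [interior_Ici] at ht
      obtain ⟨c, _, hd⟩ := hgderiv t (le_of_lt ht)
      exact hd.differentiableAt.differentiableWithinAt
    · intro t ht
      rw [interior_Ici] at ht
      obtain ⟨c, hc, hd⟩ := hgderiv t (le_of_lt ht)
      rw [hd.deriv]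
      have h2 := hynn t (le_of_lt ht)
      have he := Real.exp_pos ((γ - βp) * t)
      have h3 := mul_nonneg h2 he.le
      nlinarith
  have hexp : ∀ t ≥ (0:ℝ), y t ≤ y 0 * Real.exp ((βp - γ) * t) := by
    intro t ht
    have hgle : g t ≤ g 0 := hganti (by simp) ht ht
    have hg0 : g 0 = y 0 := by simp [hg]
    have hE : Real.exp ((βp - γ) * t) * Real.exp ((γ - βp) * t) = 1 := by
      rw [← Real.exp_add]; ring_nf; exact Real.exp_zero
    have h1 : g t * Real.exp ((βp - γ) * t) ≤ y 0 * Real.exp ((βp - γ) * t) := by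
      rw [← hg0]; exact mul_le_mul_of_nonneg_right hgle (Real.exp_pos _).le
    calc y t = g t * Real.exp ((βp - γ) * t) := by
          simp only [hg]; rw [mul_assoc, mul_comm (Real.exp _), hE, mul_one]
      _ ≤ y 0 * Real.exp ((βp - γ) * t) := h1
  refine ⟨hderiv, hanti, hexp, ?_⟩
  have hlim : Filter.Tendsto (fun t => y 0 * Real.exp ((βp - γ) * t))
      Filter.atTop (nhds 0) := by
    have h1 : Filter.Tendsto (fun t : ℝ => (βp - γ) * t) Filter.atTop Filter.atBot :=
      (Filter.tendsto_const_mul_atBot_of_neg (by linarith)).2 Filter.tendsto_id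
    have h2 := Real.tendsto_exp_atBot.comp h1
    simpa using h2.const_mul (y 0)
  apply tendsto_of_tendsto_of_tendsto_of_le_of_le' tendsto_const_nhds hlim
  · filter_upwards [Filter.eventually_ge_atTop (0:ℝ)] with t ht using hynn t ht
  · filter_upwards [Filter.eventually_ge_atTop (0:ℝ)] with t ht using hexp t ht
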